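/- In a PRF computation under garbage collection, invalid pointer variables never hold the value seg: if σ ∈ gcsem(P) is PRF and the pointer variable p satisfies p ∉ valid(σ), then heap(σ)(p) ≠ seg. -/

import Mathlib

/-!
A formalization of the framework of Haziza, Holík, Meyer, Wolff,
"Pointer Race Freedom": heaps, concurrent heap-manipulating programs,
the garbage-collected, memory-managed and ownership-respecting semantics,
validity of pointers, (strong) pointer races, and ownership.
-/

namespace PRF

open scoped Classical

noncomputable section

/-- Pointer expressions over addresses `A`, pointer variables `PV`,
with `n` next-selectors. -/
inductive PExp (A PV : Type) (n : ℕ) : Type where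
  | var  : PV → PExp A PV n
  | next : A → Fin n → PExp A PV n

/-- Data expressions over addresses `A` and data variables `DV`. -/
inductive DExp (A DV : Type) : Type where
  | var  : DV → DExp A DV
  | data : A → DExp A DV

/-- Conditions of assert commands: (negated) equalities of pointer or
data variables. -/
inductive Cond (PV DV : Type) : Type where
  | peq : PV → PV → Cond PV DV
  | deq : DV → DV → Cond PV DV
  | not : Cond PV DV → Cond PV DV

/-- Commands of the while-language. -/
inductive Com (D PV DV : Type) (n : ℕ) : Type where
  | assert    : Cond PV DV → Com D PV DV n
  | malloc    : PV → Com D PV DV n                   -- p := malloc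
  | free      : PV → Com D PV DV n                   -- free(p)
  | readNext  : PV → PV → Fin n → Com D PV DV n      -- p := q.next_i
  | writeNext : PV → Fin n → PV → Com D PV DV n      -- p.next_i := q
  | copyP     : PV → PV → Com D PV DV n              -- p := q
  | readData  : DV → PV → Com D PV DV n              -- x := q.data
  | writeData : PV → DV → Com D PV DV n              -- p.data := x
  | opAsgn    : DV → List DV → (List D → D) → Com D PV DV n  -- x := op(x1,…,xk)

/-- A heap: partial valuations of pointer and data expressions. -/
structure Heap (A D PV DV : Type) (n : ℕ) : Type where
  pval : PExp A PV n → Option A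
  dval : DExp A DV → Option D

/-- An update of a heap (applied by overriding where defined). -/
structure Update (A D PV DV : Type) (n : ℕ) : Type where
  pup : PExp A PV n → Option A
  dup : DExp A DV → Option D

/-- An action: an optional (thread, command) pair — `none` only for the
initial base action — together with an update. -/
structure Act (A D PV DV T : Type) (n : ℕ) : Type where
  tc : Option (T × Com D PV DV n)
  up : Update A D PV DV n

/-- The complement of an assert condition. -/
def Cond.negate {PV DV : Type} : Cond PV DV → Cond PV DV
  | .not b => b
  | b => .not b

/-- Pointer variables occurring in a condition. -/
def Cond.pvars {PV DV : Type} : Cond PV DV → Set PV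
  | .peq p q => {p, q}
  | .deq _ _ => ∅
  | .not b => b.pvars

/-- Data variables occurring in a condition. -/
def Cond.dvars {PV DV : Type} : Cond PV DV → Set DV
  | .peq _ _ => ∅
  | .deq x y => {x, y}
  | .not b => b.dvars

/-- Pointer variables used by a command. -/
def Com.pvars {D PV DV : Type} {n : ℕ} : Com D PV DV n → Set PV
  | .assert b => b.pvars
  | .malloc p => {p}
  | .free p => {p}
  | .readNext p q _ => {p, q}
  | .writeNext p _ q => {p, q}
  | .copyP p q => {p, q}
  | .readData _ q => {q}
  | .writeData p _ => {p}
  | .opAsgn _ _ _ => ∅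

/-- Data variables used by a command. -/
def Com.dvars {D PV DV : Type} {n : ℕ} : Com D PV DV n → Set DV
  | .assert b => b.dvars
  | .readData x _ => {x}
  | .writeData _ x => {x}
  | .opAsgn x ys _ => {x} ∪ {y | y ∈ ys}
  | _ => ∅

/-- A concurrent heap-manipulating program: a set of threads `T`, each an
ordinary while-program presented by its control-flow relation `step`;
every variable is shared (`owner = none`) or local to one thread, a thread
uses only shared variables and its own locals, and every control location
offering `assert b` also offers `assert ¬b`. -/
structure Program (D PV DV T : Type) (n : ℕ) : Type 1 where
  Ctrl : Type
  init : T → Ctrl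
  step : T → Ctrl → Com D PV DV n → Ctrl → Prop
  pOwner : PV → Option T
  dOwner : DV → Option T
  assertCompl : ∀ t c b c', step t c (.assert b) c' →
    ∃ c'', step t c (.assert b.negate) c''
  stepPVars : ∀ t c com c', step t c com c' →
    ∀ p ∈ Com.pvars com, pOwner p = none ∨ pOwner p = some t
  stepDVars : ∀ t c com c', step t c com c' →
    ∀ x ∈ Com.dvars com, dOwner x = none ∨ dOwner x = some t

variable {A D PV DV T : Type} {n : ℕ}

/-- The source address of a pointer expression (`a` for `a.next_i`). -/
def PExp.srcAdr : PExp A PV n → Option A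
  | .var _ => none
  | .next a _ => some a

/-- The source address of a data expression (`a` for `a.data`). -/
def DExp.srcAdr : DExp A DV → Option A
  | .var _ => none
  | .data a => some a

/-- The addresses in use in a heap: those occurring in the domain or range
of the pointer valuation or in the domain of the data valuation. -/
def Heap.adr (h : Heap A D PV DV n) : Set A :=
  {a | (∃ pe, h.pval pe ≠ none ∧ PExp.srcAdr pe = some a)
     ∨ (∃ pe, h.pval pe = some a)
     ∨ (∃ de, h.dval de ≠ none ∧ DExp.srcAdr de = some a)}

/-- Restriction `h|P` of a heap to a set `P` of pointer expressions: keeps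
`pval` only on `P`, keeps `dval` on data variables and on `a.data` for the
addresses `a` hit by some pointer expression in `P`. -/
def Heap.restrict (h : Heap A D PV DV n) (P : Set (PExp A PV n)) :
    Heap A D PV DV n where
  pval pe := if pe ∈ P then h.pval pe else none
  dval de := match de with
    | .var x => h.dval (.var x)
    | .data a => if ∃ pe ∈ P, h.pval pe = some a then h.dval (.data a) else none

/-- Applying an update to a heap. -/
def Heap.apply (h : Heap A D PV DV n) (u : Update A D PV DV n) :
    Heap A D PV DV n where
  pval pe := match u.pup pe with | some a => some a | none => h.pval pe
  dval de := match u.dup de with | some d => some d | none => h.dval de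

/-- The totally undefined heap. -/
def Heap.empty : Heap A D PV DV n := ⟨fun _ => none, fun _ => none⟩

/-- `h[pe ↦ a]`. -/
def Heap.pupdate (h : Heap A D PV DV n) (pe : PExp A PV n) (a : A) :
    Heap A D PV DV n :=
  ⟨fun pe' => if pe' = pe then some a else h.pval pe', h.dval⟩

/-- `h[de ↦ d]`. -/
def Heap.dupdate (h : Heap A D PV DV n) (de : DExp A DV) (d : D) :
    Heap A D PV DV n :=
  ⟨h.pval, fun de' => if de' = de then some d else h.dval de'⟩

/-- The domain of the pointer valuation. -/
def Heap.pdom (h : Heap A D PV DV n) : Set (PExp A PV n) := {pe | h.pval pe ≠ none}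

/-- The domain of the data valuation. -/
def Heap.ddom (h : Heap A D PV DV n) : Set (DExp A DV) := {de | h.dval de ≠ none}

/-- heap(τ): the heap resulting from a computation. -/
def heapOf (τ : List (Act A D PV DV T n)) : Heap A D PV DV n :=
  τ.foldl (fun h act => h.apply act.up) Heap.empty

/-- The empty update. -/
def Update.empty : Update A D PV DV n := ⟨fun _ => none, fun _ => none⟩

/-- The singleton pointer update `[pe ↦ a]`. -/
def Update.pt (pe : PExp A PV n) (a : A) : Update A D PV DV n :=
  ⟨fun pe' => if pe' = pe then some a else none, fun _ => none⟩

/-- The singleton data update `[de ↦ d]`. -/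
def Update.dt (de : DExp A DV) (d : D) : Update A D PV DV n :=
  ⟨fun _ => none, fun de' => if de' = de then some d else none⟩

/-- The update of rule (Malloc1): `[p ↦ a, a.data ↦ d, a.next_i ↦ seg]`. -/
def mallocUpdate (seg : A) (p : PV) (a : A) (d : D) : Update A D PV DV n :=
  ⟨fun pe => if pe = PExp.var p then some a
             else if ∃ i, pe = PExp.next a i then some seg else none,
   fun de => if de = DExp.data a then some d else none⟩

/-- The update of the base action: every pointer variable is set to `seg`,
every data variable to an arbitrary initial value. -/
def baseUpdate (seg : A) (dinit : DV → D) : Update A D PV DV n :=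
  ⟨fun pe => match pe with | .var _ => some seg | _ => none,
   fun de => match de with | .var x => some (dinit x) | _ => none⟩

/-- Satisfaction of a condition (with polarity); an assertion and its
negation both pass when an involved pointer holds `seg`. -/
def condSat (seg : A) (h : Heap A D PV DV n) : Bool → Cond PV DV → Prop
  | pol, .not b => condSat seg h (!pol) b
  | pol, .peq p q =>
      (if pol then h.pval (.var p) = h.pval (.var q)
       else h.pval (.var p) ≠ h.pval (.var q))
      ∨ h.pval (.var p) = some seg ∨ h.pval (.var q) = some seg
  | pol, .deq x y =>
      if pol then h.dval (.var x) = h.dval (.var y)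
      else h.dval (.var x) ≠ h.dval (.var y)

/-- One step of the freed-addresses bookkeeping. -/
def freedStep (seg : A) (h : Heap A D PV DV n) (F : Set A)
    (act : Act A D PV DV T n) : Set A :=
  match act.tc with
  | some (_, .free p) =>
      match h.pval (.var p) with
      | some a => if a = seg then F else insert a F
      | none => F
  | some (_, .malloc p) =>
      match act.up.pup (.var p) with
      | some a => F \ {a}
      | none => F
  | _ => F

def freedAux (seg : A) : Heap A D PV DV n → Set A → List (Act A D PV DV T n) → Set A
  | _, F, [] => F
  | h, F, act :: τ => freedAux seg (h.apply act.up) (freedStep seg h F act) τ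

/-- freed(τ): addresses freed and not re-allocated since. -/
def freedOf (seg : A) (τ : List (Act A D PV DV T n)) : Set A :=
  freedAux seg Heap.empty ∅ τ

/-- invalid(a): the pointer expressions invalidated by freeing `a`. -/
def invalidOf (h : Heap A D PV DV n) (a : A) : Set (PExp A PV n) :=
  {pe | h.pval pe = some a} ∪ {pe | ∃ i, pe = PExp.next a i}

/-- One step of the validity bookkeeping. -/
def validStep (seg : A) (h : Heap A D PV DV n) (V : Set (PExp A PV n))
    (act : Act A D PV DV T n) : Set (PExp A PV n) :=
  match act.tc with
  | some (_, .free p) =>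
      match h.pval (.var p) with
      | some a => if a = seg then V else V \ invalidOf h a
      | none => V
  | some (_, .copyP p q) =>
      if PExp.var q ∈ V then insert (PExp.var p) V else V \ {PExp.var p}
  | some (_, .readNext p q i) =>
      match h.pval (.var q) with
      | some a => if PExp.next a i ∈ V then insert (PExp.var p) V else V \ {PExp.var p}
      | none => V \ {PExp.var p}
  | some (_, .writeNext p i q) =>
      match h.pval (.var p) with
      | some a => if PExp.var q ∈ V then insert (PExp.next a i) V else V \ {PExp.next a i}
      | none => V
  | some (_, .malloc p) =>
      match act.up.pup (.var p) with
      | some a =>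
          insert (PExp.var p) V ∪
            {pe | ∃ i, pe = PExp.next a i ∧ act.up.pup (PExp.next a i) ≠ none}
      | none => V
  | _ => V

def validAux (seg : A) : Heap A D PV DV n → Set (PExp A PV n) →
    List (Act A D PV DV T n) → Set (PExp A PV n)
  | _, V, [] => V
  | h, V, act :: τ => validAux seg (h.apply act.up) (validStep seg h V act) τ

/-- valid(τ): the valid pointer expressions after a computation; initially
all pointer variables are valid. -/
def validOf (seg : A) (τ : List (Act A D PV DV T n)) : Set (PExp A PV n) :=
  validAux seg Heap.empty {pe | ∃ p, pe = PExp.var p} τ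

/-- One step of the strong-invalidity bookkeeping: a variable becomes
strongly invalid when its value is obtained by dereferencing an invalid
pointer; strong invalidity is propagated by assignments. -/
def sinvStep (h : Heap A D PV DV n) (V : Set (PExp A PV n)) (S : Set (PV ⊕ DV))
    (act : Act A D PV DV T n) : Set (PV ⊕ DV) :=
  match act.tc with
  | some (_, .readNext p q _) =>
      if PExp.var q ∈ V then S \ {Sum.inl p} else insert (Sum.inl p) S
  | some (_, .readData x q) =>
      if PExp.var q ∈ V then S \ {Sum.inr x} else insert (Sum.inr x) S
  | some (_, .copyP p q) =>
      if Sum.inl q ∈ S then insert (Sum.inl p) S else S \ {Sum.inl p}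
  | some (_, .opAsgn x ys _) =>
      if ∃ y ∈ ys, Sum.inr y ∈ S then insert (Sum.inr x) S else S \ {Sum.inr x}
  | some (_, .malloc p) => S \ {Sum.inl p}
  | _ => S

def sinvAux (seg : A) : Heap A D PV DV n → Set (PExp A PV n) → Set (PV ⊕ DV) →
    List (Act A D PV DV T n) → Set (PV ⊕ DV)
  | _, _, S, [] => S
  | h, V, S, act :: τ =>
      sinvAux seg (h.apply act.up) (validStep seg h V act) (sinvStep h V S act) τ

/-- The strongly invalid variables after a computation. -/
def sinvOf (seg : A) (τ : List (Act A D PV DV T n)) : Set (PV ⊕ DV) :=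
  sinvAux seg Heap.empty {pe | ∃ p, pe = PExp.var p} ∅ τ

/-- An assignment command publishes the owned address `a` if it copies `a`
via a valid pointer into a shared variable, a variable of another thread,
or into the heap outside the owner's cells. -/
def publishedBy (P : Program D PV DV T n) (h : Heap A D PV DV n)
    (V : Set (PExp A PV n)) (W : A → Option T) (com : Com D PV DV n) (a : A) :
    Prop :=
  ∃ t', W a = some t' ∧
    ((∃ p q, com = .copyP p q ∧ PExp.var q ∈ V ∧ h.pval (.var q) = some a ∧
        P.pOwner p ≠ some t')
     ∨ (∃ p q i b, com = .readNext p q i ∧ h.pval (.var q) = some b ∧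
        PExp.next b i ∈ V ∧ h.pval (.next b i) = some a ∧ P.pOwner p ≠ some t')
     ∨ (∃ p i q b, com = .writeNext p i q ∧ PExp.var q ∈ V ∧
        h.pval (.var q) = some a ∧ h.pval (.var p) = some b ∧ W b ≠ some t'))

/-- One step of the ownership bookkeeping: a thread owns an address it
allocated (into one of its local variables) by the most recent allocation,
until the address is freed or published. -/
def ownedStep (seg : A) (P : Program D PV DV T n) (h : Heap A D PV DV n)
    (V : Set (PExp A PV n)) (W : A → Option T) (act : Act A D PV DV T n) :
    A → Option T := fun a =>
  match act.tc with
  | some (t, .malloc p) =>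
      match act.up.pup (.var p) with
      | some b => if a = b then (if P.pOwner p = some t then some t else none) else W a
      | none => W a
  | some (_, .free p) =>
      match h.pval (.var p) with
      | some b => if a = b ∧ b ≠ seg then none else W a
      | none => W a
  | some (_, com) => if publishedBy P h V W com a then none else W a
  | none => W a

def ownedAux (seg : A) (P : Program D PV DV T n) :
    Heap A D PV DV n → Set (PExp A PV n) → (A → Option T) →
      List (Act A D PV DV T n) → (A → Option T)
  | _, _, W, [] => W
  | h, V, W, act :: τ =>
      ownedAux seg P (h.apply act.up) (validStep seg h V act)
        (ownedStep seg P h V W act) τ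

/-- owned(·, τ) as a map from addresses to their owning thread, if any. -/
def ownedOf (seg : A) (P : Program D PV DV T n) (τ : List (Act A D PV DV T n)) :
    A → Option T :=
  ownedAux seg P Heap.empty {pe | ∃ p, pe = PExp.var p} (fun _ => none) τ

/-- The operational semantics: `mm = false` gives the garbage-collected
semantics (only rule (Malloc1)), `mm = true` additionally enables (Malloc2). -/
inductive Sem (seg : A) (P : Program D PV DV T n) (mm : Bool) :
    List (Act A D PV DV T n) → (T → P.Ctrl) → Prop where
  | base (dinit : DV → D) :
      Sem seg P mm [⟨none, baseUpdate seg dinit⟩] P.init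
  | assert {τ ctrl} (t : T) (b : Cond PV DV) (c' : P.Ctrl) :
      Sem seg P mm τ ctrl →
      P.step t (ctrl t) (.assert b) c' →
      condSat seg (heapOf τ) true b →
      Sem seg P mm (τ ++ [⟨some (t, .assert b), Update.empty⟩])
        (Function.update ctrl t c')
  | free {τ ctrl} (t : T) (p : PV) (c' : P.Ctrl) :
      Sem seg P mm τ ctrl →
      P.step t (ctrl t) (.free p) c' →
      Sem seg P mm (τ ++ [⟨some (t, .free p), Update.empty⟩])
        (Function.update ctrl t c')
  | copyP {τ ctrl} (t : T) (p q : PV) (c' : P.Ctrl) (b : A) :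
      Sem seg P mm τ ctrl →
      P.step t (ctrl t) (.copyP p q) c' →
      (heapOf τ).pval (.var q) = some b →
      Sem seg P mm (τ ++ [⟨some (t, .copyP p q), Update.pt (.var p) b⟩])
        (Function.update ctrl t c')
  | readNext {τ ctrl} (t : T) (p q : PV) (i : Fin n) (c' : P.Ctrl) (a b : A) :
      Sem seg P mm τ ctrl →
      P.step t (ctrl t) (.readNext p q i) c' →
      (heapOf τ).pval (.var q) = some a → a ≠ seg →
      (heapOf τ).pval (.next a i) = some b →
      Sem seg P mm (τ ++ [⟨some (t, .readNext p q i), Update.pt (.var p) b⟩])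
        (Function.update ctrl t c')
  | writeNext {τ ctrl} (t : T) (p : PV) (i : Fin n) (q : PV) (c' : P.Ctrl) (a b : A) :
      Sem seg P mm τ ctrl →
      P.step t (ctrl t) (.writeNext p i q) c' →
      (heapOf τ).pval (.var p) = some a → a ≠ seg →
      (heapOf τ).pval (.var q) = some b →
      Sem seg P mm (τ ++ [⟨some (t, .writeNext p i q), Update.pt (.next a i) b⟩])
        (Function.update ctrl t c')
  | readData {τ ctrl} (t : T) (x : DV) (q : PV) (c' : P.Ctrl) (a : A) (d : D) :
      Sem seg P mm τ ctrl →
      P.step t (ctrl t) (.readData x q) c' →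
      (heapOf τ).pval (.var q) = some a → a ≠ seg →
      (heapOf τ).dval (.data a) = some d →
      Sem seg P mm (τ ++ [⟨some (t, .readData x q), Update.dt (.var x) d⟩])
        (Function.update ctrl t c')
  | writeData {τ ctrl} (t : T) (q : PV) (x : DV) (c' : P.Ctrl) (a : A) (d : D) :
      Sem seg P mm τ ctrl →
      P.step t (ctrl t) (.writeData q x) c' →
      (heapOf τ).pval (.var q) = some a → a ≠ seg →
      (heapOf τ).dval (.var x) = some d →
      Sem seg P mm (τ ++ [⟨some (t, .writeData q x), Update.dt (.data a) d⟩])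
        (Function.update ctrl t c')
  | opAsgn {τ ctrl} (t : T) (x : DV) (ys : List DV) (op : List D → D)
      (c' : P.Ctrl) (ds : List D) :
      Sem seg P mm τ ctrl →
      P.step t (ctrl t) (.opAsgn x ys op) c' →
      ys.mapM (fun y => (heapOf τ).dval (.var y)) = some ds →
      Sem seg P mm (τ ++ [⟨some (t, .opAsgn x ys op), Update.dt (.var x) (op ds)⟩])
        (Function.update ctrl t c')
  | malloc1 {τ ctrl} (t : T) (p : PV) (c' : P.Ctrl) (a : A) (d : D) :
      Sem seg P mm τ ctrl →
      P.step t (ctrl t) (.malloc p) c' →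
      a ∉ (heapOf τ).adr →
      Sem seg P mm (τ ++ [⟨some (t, .malloc p), mallocUpdate seg p a d⟩])
        (Function.update ctrl t c')
  | malloc2 {τ ctrl} (t : T) (p : PV) (c' : P.Ctrl) (a : A) :
      mm = true →
      Sem seg P mm τ ctrl →
      P.step t (ctrl t) (.malloc p) c' →
      a ∈ freedOf seg τ →
      Sem seg P mm (τ ++ [⟨some (t, .malloc p), Update.pt (.var p) a⟩])
        (Function.update ctrl t c')

/-- The garbage-collected semantics gcsem(P). -/
def gcsem (seg : A) (P : Program D PV DV T n) : Set (List (Act A D PV DV T n)) :=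
  {τ | ∃ ctrl, Sem seg P false τ ctrl}

/-- The memory-managed semantics mmsem(P). -/
def mmsem (seg : A) (P : Program D PV DV T n) : Set (List (Act A D PV DV T n)) :=
  {τ | ∃ ctrl, Sem seg P true τ ctrl}

/-- The pointer variables a command frees, dereferences, or uses in an
assertion. -/
def racyVars {D PV DV : Type} {n : ℕ} : Com D PV DV n → Set PV
  | .free p => {p}
  | .readNext _ q _ => {q}
  | .writeNext p _ _ => {p}
  | .readData _ q => {q}
  | .writeData p _ => {p}
  | .assert b => b.pvars
  | _ => ∅

/-- The action `act` raises a pointer race after `τ`. -/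
def isPRStep (seg : A) (τ : List (Act A D PV DV T n)) (act : Act A D PV DV T n) :
    Prop :=
  ∃ t com, act.tc = some (t, com) ∧ ∃ p ∈ racyVars com, PExp.var p ∉ validOf seg τ

/-- The computation `σ` is a pointer race. -/
def isPR (seg : A) (σ : List (Act A D PV DV T n)) : Prop :=
  ∃ τ act, σ = τ ++ [act] ∧ isPRStep seg τ act

/-- A set of computations is PRF if it contains no pointer race. -/
def SetPRF (seg : A) (S : Set (List (Act A D PV DV T n))) : Prop :=
  ∀ σ ∈ S, ¬ isPR seg σ

/-- A computation is PRF if none of its prefixes is a pointer race. -/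
def CompPRF (seg : A) (τ : List (Act A D PV DV T n)) : Prop :=
  ∀ σ, σ <+: τ → ¬ isPR seg σ

/-- The action `act` raises a strong pointer race after `τ`. -/
def isSPRStep (seg : A) (τ : List (Act A D PV DV T n)) (act : Act A D PV DV T n) :
    Prop :=
  ∃ t com, act.tc = some (t, com) ∧
    ((∃ p : PV,
        (com = .free p ∨ (∃ i q, com = .writeNext p i q) ∨ (∃ x, com = .writeData p x)) ∧
        PExp.var p ∉ validOf seg τ)
     ∨ (∃ q : PV,
        ((∃ p i, com = .readNext p q i) ∨ (∃ x, com = .readData x q)) ∧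
        Sum.inl q ∈ sinvOf seg τ)
     ∨ (∃ b, com = .assert b ∧
        ((∃ p ∈ Cond.pvars b, Sum.inl p ∈ sinvOf seg τ)
         ∨ (∃ x ∈ Cond.dvars b, Sum.inr x ∈ sinvOf seg τ))))

/-- The computation `σ` is a strong pointer race. -/
def isSPR (seg : A) (σ : List (Act A D PV DV T n)) : Prop :=
  ∃ τ act, σ = τ ++ [act] ∧ isSPRStep seg τ act

/-- A set of computations is SPRF if it contains no strong pointer race. -/
def SetSPRF (seg : A) (S : Set (List (Act A D PV DV T n))) : Prop :=
  ∀ σ ∈ S, ¬ isSPR seg σ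

/-- A computation is SPRF if none of its prefixes is a strong pointer race. -/
def CompSPRF (seg : A) (τ : List (Act A D PV DV T n)) : Prop :=
  ∀ σ, σ <+: τ → ¬ isSPR seg σ

/-- The action `act` extending `τ` violates ownership. -/
def violatesOwnership (seg : A) (P : Program D PV DV T n)
    (τ : List (Act A D PV DV T n)) (act : Act A D PV DV T n) : Prop :=
  ∃ t com, act.tc = some (t, com) ∧
    ∃ p : PV,
      (com = .free p ∨ (∃ i q, com = .writeNext p i q) ∨ (∃ x, com = .writeData p x)) ∧
      ∃ a t', (heapOf τ).pval (.var p) = some a ∧ ownedOf seg P τ a = some t' ∧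
        (t' ≠ t ∨ P.pOwner p = none)

/-- The ownership-respecting semantics resmmsem(P): the computations of
mmsem(P) none of whose actions violates ownership. -/
def resmmsem (seg : A) (P : Program D PV DV T n) : Set (List (Act A D PV DV T n)) :=
  {σ | σ ∈ mmsem seg P ∧ ∀ τ act, (τ ++ [act]) <+: σ → ¬ violatesOwnership seg P τ act}

/-- The extension of an address map to pointer expressions. -/
def mapPExp (f : A → A) : PExp A PV n → PExp A PV n
  | .var p => .var p
  | .next a i => .next (f a) i

/-- The extension of an address map to data expressions. -/
def mapDExp (f : A → A) : DExp A DV → DExp A DV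
  | .var x => .var x
  | .data a => .data (f a)

/-- `f` is a heap isomorphism from `h1` to `h2`: a bijection between the
addresses in use whose extension to expressions (with `f seg = seg`) is a
bijection between the domains and is compatible with the valuations. -/
structure IsHeapIso (seg : A) (h1 h2 : Heap A D PV DV n) (f : A → A) : Prop where
  fseg : f seg = seg
  adrBij : Set.BijOn f h1.adr h2.adr
  pdomBij : Set.BijOn (mapPExp f) h1.pdom h2.pdom
  ddomBij : Set.BijOn (mapDExp f) h1.ddom h2.ddom
  pcompat : ∀ pe ∈ h1.pdom, h2.pval (mapPExp f pe) = (h1.pval pe).map f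
  dcompat : ∀ de ∈ h1.ddom, h2.dval (mapDExp f de) = h1.dval de

/-- `h1 ≅ h2`. -/
def HeapIso (seg : A) (h1 h2 : Heap A D PV DV n) : Prop :=
  ∃ f, IsHeapIso seg h1 h2 f

/-- Heap equivalence of computations: same projection to (thread, command)
pairs and isomorphic valid-restricted heaps. -/
def heapEquiv (seg : A) (τ σ : List (Act A D PV DV T n)) : Prop :=
  τ.map Act.tc = σ.map Act.tc ∧
  HeapIso seg ((heapOf τ).restrict (validOf seg τ))
    ((heapOf σ).restrict (validOf seg σ))

/-- The owning pointers after `τ`: valid pointer expressions whose target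
is owned, together with valid next selectors of owned addresses. -/
def ownpOf (seg : A) (P : Program D PV DV T n) (τ : List (Act A D PV DV T n)) :
    Set (PExp A PV n) :=
  {pe | pe ∈ validOf seg τ ∧
    ((∃ a t, (heapOf τ).pval pe = some a ∧ ownedOf seg P τ a = some t)
     ∨ (∃ a i t, pe = PExp.next a i ∧ ownedOf seg P τ a = some t))}

/-- The target and source addresses of a pointer expression in a heap. -/
def exprAdrs (h : Heap A D PV DV n) (pe : PExp A PV n) : Set A :=
  {a | h.pval pe = some a} ∪ {a | PExp.srcAdr pe = some a}

/-- A set of owning pointers is coherent if owning pointers sharing a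
target or source address are included or excluded together. -/
def Coherent (seg : A) (P : Program D PV DV T n) (τ : List (Act A D PV DV T n))
    (O : Set (PExp A PV n)) : Prop :=
  ∀ pe ∈ ownpOf seg P τ, ∀ pe' ∈ ownpOf seg P τ,
    (∃ a, a ∈ exprAdrs (heapOf τ) pe ∧ a ∈ exprAdrs (heapOf τ) pe') →
    (pe ∈ O ↔ pe' ∈ O)

/-- The addresses occurring in a set of pointer expressions. -/
def adrsOfSet (h : Heap A D PV DV n) (O : Set (PExp A PV n)) : Set A :=
  ⋃ pe ∈ O, exprAdrs h pe


/-! ### Auxiliary lemmas for STATEMENT 9 -/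

lemma heapOf_append (τ : List (Act A D PV DV T n)) (act : Act A D PV DV T n) :
    heapOf (τ ++ [act]) = (heapOf τ).apply act.up := by
  simp [heapOf, List.foldl_append]

lemma validAux_append (seg : A) (τ : List (Act A D PV DV T n)) (act : Act A D PV DV T n) :
    ∀ (h : Heap A D PV DV n) (V : Set (PExp A PV n)),
      validAux seg h V (τ ++ [act]) =
        validStep seg (List.foldl (fun h a => h.apply a.up) h τ) (validAux seg h V τ) act := by
  induction τ with
  | nil => intro h V; simp [validAux]
  | cons a τ ih => intro h V; simpa [validAux] using ih _ _

lemma validOf_append (seg : A) (τ : List (Act A D PV DV T n)) (act : Act A D PV DV T n) :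
    validOf seg (τ ++ [act]) = validStep seg (heapOf τ) (validOf seg τ) act := by
  simpa [validOf, heapOf] using validAux_append seg τ act Heap.empty _

lemma freedAux_append (seg : A) (τ : List (Act A D PV DV T n)) (act : Act A D PV DV T n) :
    ∀ (h : Heap A D PV DV n) (F : Set A),
      freedAux seg h F (τ ++ [act]) =
        freedStep seg (List.foldl (fun h a => h.apply a.up) h τ) (freedAux seg h F τ) act := by
  induction τ with
  | nil => intro h F; simp [freedAux]
  | cons a τ ih => intro h F; simpa [freedAux] using ih _ _

lemma freedOf_append (seg : A) (τ : List (Act A D PV DV T n)) (act : Act A D PV DV T n) :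
    freedOf seg (τ ++ [act]) = freedStep seg (heapOf τ) (freedOf seg τ) act := by
  simpa [freedOf, heapOf] using freedAux_append seg τ act Heap.empty _

/-- The invariant maintained by PRF computations under garbage collection. -/
structure Inv (seg : A) (τ : List (Act A D PV DV T n)) : Prop where
  hA : ∀ p : PV, (heapOf τ).pval (.var p) ≠ none
  hB : ∀ pe a, (heapOf τ).pval pe = some a → a ≠ seg → (heapOf τ).dval (.data a) ≠ none
  hB' : ∀ a ∈ freedOf seg τ, (heapOf τ).dval (.data a) ≠ none
  hC : seg ∉ freedOf seg τ
  hD : ∀ pe ∈ validOf seg τ, ∀ a, (heapOf τ).pval pe = some a → a ∉ freedOf seg τ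
  hE : ∀ pe ∉ validOf seg τ, (heapOf τ).pval pe = some seg →
        ∃ a i, pe = PExp.next a i ∧ a ∈ freedOf seg τ

lemma CompPRF_prefix {seg : A} {τ σ : List (Act A D PV DV T n)}
    (h : CompPRF seg σ) (hpre : τ <+: σ) : CompPRF seg τ :=
  fun ρ hρ => h ρ (hρ.trans hpre)

lemma CompPRF_last {seg : A} {τ : List (Act A D PV DV T n)} {act : Act A D PV DV T n}
    (h : CompPRF seg (τ ++ [act])) : ¬ isPRStep seg τ act :=
  fun hstep => h (τ ++ [act]) List.prefix_rfl ⟨τ, act, rfl, hstep⟩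

lemma racy_valid {seg : A} {τ : List (Act A D PV DV T n)} {act : Act A D PV DV T n}
    (h : CompPRF seg (τ ++ [act])) {t : T} {com : Com D PV DV n}
    (htc : act.tc = some (t, com)) {p : PV} (hp : p ∈ racyVars com) :
    PExp.var p ∈ validOf seg τ := by
  by_contra hc
  exact CompPRF_last h ⟨t, com, htc, p, hp, hc⟩

lemma pval_apply_ne (h : Heap A D PV DV n) (u : Update A D PV DV n) (pe : PExp A PV n)
    (hne : h.pval pe ≠ none) : (h.apply u).pval pe ≠ none := by
  simp only [Heap.apply]
  cases u.pup pe <;> simp [hne]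

lemma dval_apply_ne (h : Heap A D PV DV n) (u : Update A D PV DV n) (de : DExp A DV)
    (hne : h.dval de ≠ none) : (h.apply u).dval de ≠ none := by
  simp only [Heap.apply]
  cases u.dup de <;> simp [hne]

lemma apply_empty (h : Heap A D PV DV n) : h.apply (Update.empty : Update A D PV DV n) = h :=
  rfl

lemma pval_apply_pt (h : Heap A D PV DV n) (pe0 : PExp A PV n) (a : A) (pe : PExp A PV n) :
    (h.apply (Update.pt pe0 a)).pval pe = if pe = pe0 then some a else h.pval pe := by
  by_cases h' : pe = pe0 <;> simp [Heap.apply, Update.pt, h']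

lemma dval_apply_pt (h : Heap A D PV DV n) (pe0 : PExp A PV n) (a : A) (de : DExp A DV) :
    (h.apply (Update.pt pe0 a)).dval de = h.dval de := rfl

lemma pval_apply_dt (h : Heap A D PV DV n) (de0 : DExp A DV) (d : D) (pe : PExp A PV n) :
    (h.apply (Update.dt de0 d)).pval pe = h.pval pe := rfl

lemma pval_apply_malloc (h : Heap A D PV DV n) (seg : A) (p : PV) (a : A) (d : D)
    (pe : PExp A PV n) :
    (h.apply (mallocUpdate seg p a d)).pval pe =
      if pe = .var p then some a
      else if ∃ i, pe = PExp.next a i then some seg else h.pval pe := by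
  by_cases h1 : pe = PExp.var p
  · simp [Heap.apply, mallocUpdate, h1]
  · by_cases h2 : ∃ i, pe = PExp.next a i <;> simp [Heap.apply, mallocUpdate, h1, h2]

lemma dval_apply_malloc (h : Heap A D PV DV n) (seg : A) (p : PV) (a : A) (d : D)
    (de : DExp A DV) :
    (h.apply (mallocUpdate seg p a d)).dval de =
      if de = .data a then some d else h.dval de := by
  by_cases h1 : de = DExp.data a <;> simp [Heap.apply, mallocUpdate, h1]

section StepLemmas

variable (seg : A) (h : Heap A D PV DV n) (V : Set (PExp A PV n)) (F : Set A)
  (t : T) (u : Update A D PV DV n)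

lemma validStep_assert (b : Cond PV DV) :
    validStep seg h V ⟨some (t, Com.assert b), u⟩ = V := rfl

lemma validStep_readData (x : DV) (q : PV) :
    validStep seg h V ⟨some (t, Com.readData x q), u⟩ = V := rfl

lemma validStep_writeData (q : PV) (x : DV) :
    validStep seg h V ⟨some (t, Com.writeData q x), u⟩ = V := rfl

lemma validStep_opAsgn (x : DV) (ys : List DV) (op : List D → D) :
    validStep seg h V ⟨some (t, Com.opAsgn x ys op), u⟩ = V := rfl

lemma validStep_free (p : PV) {a : A} (ha : h.pval (.var p) = some a) :
    validStep seg h V ⟨some (t, Com.free p), u⟩ =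
      if a = seg then V else V \ invalidOf h a := by
  show (match h.pval (.var p) with
        | some a => if a = seg then V else V \ invalidOf h a
        | none => V) = _
  rw [ha]

lemma validStep_copyP (p q : PV) :
    validStep seg h V ⟨some (t, Com.copyP p q), u⟩ =
      if PExp.var q ∈ V then insert (PExp.var p) V else V \ {PExp.var p} := rfl

lemma validStep_readNext (p q : PV) (i : Fin n) {a : A} (ha : h.pval (.var q) = some a) :
    validStep seg h V ⟨some (t, Com.readNext p q i), u⟩ =
      if PExp.next a i ∈ V then insert (PExp.var p) V else V \ {PExp.var p} := by
  show (match h.pval (.var q) with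
        | some a => if PExp.next a i ∈ V then insert (PExp.var p) V else V \ {PExp.var p}
        | none => V \ {PExp.var p}) = _
  rw [ha]

lemma validStep_writeNext (p : PV) (i : Fin n) (q : PV) {a : A}
    (ha : h.pval (.var p) = some a) :
    validStep seg h V ⟨some (t, Com.writeNext p i q), u⟩ =
      if PExp.var q ∈ V then insert (PExp.next a i) V else V \ {PExp.next a i} := by
  show (match h.pval (.var p) with
        | some a => if PExp.var q ∈ V then insert (PExp.next a i) V else V \ {PExp.next a i}
        | none => V) = _
  rw [ha]

lemma validStep_malloc (p : PV) {a : A} (ha : u.pup (.var p) = some a) :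
    validStep seg h V ⟨some (t, Com.malloc p), u⟩ =
      insert (PExp.var p) V ∪
        {pe | ∃ i, pe = PExp.next a i ∧ u.pup (PExp.next a i) ≠ none} := by
  show (match u.pup (.var p) with
        | some a => insert (PExp.var p) V ∪
            {pe | ∃ i, pe = PExp.next a i ∧ u.pup (PExp.next a i) ≠ none}
        | none => V) = _
  rw [ha]

lemma freedStep_assert (b : Cond PV DV) :
    freedStep seg h F ⟨some (t, Com.assert b), u⟩ = F := rfl

lemma freedStep_readData (x : DV) (q : PV) :
    freedStep seg h F ⟨some (t, Com.readData x q), u⟩ = F := rfl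

lemma freedStep_writeData (q : PV) (x : DV) :
    freedStep seg h F ⟨some (t, Com.writeData q x), u⟩ = F := rfl

lemma freedStep_opAsgn (x : DV) (ys : List DV) (op : List D → D) :
    freedStep seg h F ⟨some (t, Com.opAsgn x ys op), u⟩ = F := rfl

lemma freedStep_copyP (p q : PV) :
    freedStep seg h F ⟨some (t, Com.copyP p q), u⟩ = F := rfl

lemma freedStep_readNext (p q : PV) (i : Fin n) :
    freedStep seg h F ⟨some (t, Com.readNext p q i), u⟩ = F := rfl

lemma freedStep_writeNext (p : PV) (i : Fin n) (q : PV) :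
    freedStep seg h F ⟨some (t, Com.writeNext p i q), u⟩ = F := rfl

lemma freedStep_free (p : PV) {a : A} (ha : h.pval (.var p) = some a) :
    freedStep seg h F ⟨some (t, Com.free p), u⟩ =
      if a = seg then F else insert a F := by
  show (match h.pval (.var p) with
        | some a => if a = seg then F else insert a F
        | none => F) = _
  rw [ha]

lemma freedStep_malloc (p : PV) {a : A} (ha : u.pup (.var p) = some a) :
    freedStep seg h F ⟨some (t, Com.malloc p), u⟩ = F \ {a} := by
  show (match u.pup (.var p) with
        | some a => F \ {a}
        | none => F) = _
  rw [ha]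

end StepLemmas

lemma Inv.step_const {seg : A} {τ : List (Act A D PV DV T n)} {act : Act A D PV DV T n}
    (inv : Inv seg τ)
    (hpv : ∀ pe, (heapOf (τ ++ [act])).pval pe = (heapOf τ).pval pe)
    (hv : validOf seg (τ ++ [act]) = validOf seg τ)
    (hf : freedOf seg (τ ++ [act]) = freedOf seg τ) : Inv seg (τ ++ [act]) := by
  obtain ⟨hA, hB, hB', hC, hD, hE⟩ := inv
  refine ⟨fun q => ?_, fun pe a h1 h2 => ?_, fun a ha => ?_, ?_, fun pe hpe a h1 => ?_,
    fun pe hpe h1 => ?_⟩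
  · rw [hpv]; exact hA q
  · rw [heapOf_append]; exact dval_apply_ne _ _ _ (hB pe a (by rwa [hpv] at h1) h2)
  · rw [heapOf_append]; exact dval_apply_ne _ _ _ (hB' a (by rwa [hf] at ha))
  · rw [hf]; exact hC
  · rw [hf]; exact hD pe (by rwa [hv] at hpe) a (by rwa [hpv] at h1)
  · rw [hf]; exact hE pe (by rwa [hv] at hpe) (by rwa [hpv] at h1)

lemma inv_of_sem {seg : A} {P : Program D PV DV T n}
    {τ : List (Act A D PV DV T n)} {ctrl : T → P.Ctrl}
    (hσ : Sem seg P false τ ctrl) (hPRF : CompPRF seg τ) : Inv seg τ := by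
  revert hPRF
  induction hσ with
  | base dinit =>
    intro _
    refine ⟨fun q => ?_, fun pe c h1 h2 => ?_, fun c hc => ?_, fun hc => ?_,
      fun pe hpe c h1 hc => ?_, fun pe hpe h1 => ?_⟩
    · exact Option.some_ne_none seg
    · cases pe with
      | var r => exact absurd (Option.some.inj h1).symm h2
      | next b i => exact absurd (show (none : Option A) = some c from h1) (by simp)
    · exact absurd hc (Set.notMem_empty c)
    · exact Set.notMem_empty seg hc
    · exact Set.notMem_empty c hc
    · cases pe with
      | var q => exact absurd ⟨q, rfl⟩ hpe
      | next b i => exact absurd (show (none : Option A) = some seg from h1) (by simp)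
  | assert t b c' hsem hstep hsat ih =>
    rename_i τ ctrl
    intro hPRF
    have inv := ih (CompPRF_prefix hPRF (List.prefix_append _ _))
    refine Inv.step_const inv (fun pe => ?_) ?_ ?_
    · rw [heapOf_append, apply_empty]
    · rw [validOf_append, validStep_assert]
    · rw [freedOf_append, freedStep_assert]
  | readData t x q c' a d hsem hstep ha hane hd ih =>
    rename_i τ ctrl
    intro hPRF
    have inv := ih (CompPRF_prefix hPRF (List.prefix_append _ _))
    refine Inv.step_const inv (fun pe => ?_) ?_ ?_
    · rw [heapOf_append, pval_apply_dt]
    · rw [validOf_append, validStep_readData]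
    · rw [freedOf_append, freedStep_readData]
  | writeData t q x c' a d hsem hstep ha hane hd ih =>
    rename_i τ ctrl
    intro hPRF
    have inv := ih (CompPRF_prefix hPRF (List.prefix_append _ _))
    refine Inv.step_const inv (fun pe => ?_) ?_ ?_
    · rw [heapOf_append, pval_apply_dt]
    · rw [validOf_append, validStep_writeData]
    · rw [freedOf_append, freedStep_writeData]
  | opAsgn t x ys op c' ds hsem hstep hds ih =>
    rename_i τ ctrl
    intro hPRF
    have inv := ih (CompPRF_prefix hPRF (List.prefix_append _ _))
    refine Inv.step_const inv (fun pe => ?_) ?_ ?_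
    · rw [heapOf_append, pval_apply_dt]
    · rw [validOf_append, validStep_opAsgn]
    · rw [freedOf_append, freedStep_opAsgn]
  | free t p c' hsem hstep ih =>
    rename_i τ ctrl
    intro hPRF
    have inv := ih (CompPRF_prefix hPRF (List.prefix_append _ _))
    have hpval : PExp.var p ∈ validOf seg τ := racy_valid hPRF rfl rfl
    obtain ⟨a, ha⟩ : ∃ a, (heapOf τ).pval (.var p) = some a :=
      Option.ne_none_iff_exists'.mp (inv.hA p)
    have hH : heapOf (τ ++ [(⟨some (t, Com.free p), Update.empty⟩ : Act A D PV DV T n)])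
        = heapOf τ := by rw [heapOf_append, apply_empty]
    by_cases hseg : a = seg
    · refine Inv.step_const inv (fun pe => by rw [hH]) ?_ ?_
      · rw [validOf_append, validStep_free (ha := ha), if_pos hseg]
      · rw [freedOf_append, freedStep_free (ha := ha), if_pos hseg]
    · have hv : validOf seg (τ ++ [(⟨some (t, Com.free p), Update.empty⟩ : Act A D PV DV T n)])
          = validOf seg τ \ invalidOf (heapOf τ) a := by
        rw [validOf_append, validStep_free (ha := ha), if_neg hseg]
      have hf : freedOf seg (τ ++ [(⟨some (t, Com.free p), Update.empty⟩ : Act A D PV DV T n)])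
          = insert a (freedOf seg τ) := by
        rw [freedOf_append, freedStep_free (ha := ha), if_neg hseg]
      refine ⟨fun q => ?_, fun pe c h1 h2 => ?_, fun c hc => ?_, ?_,
        fun pe hpe c h1 => ?_, fun pe hpe h1 => ?_⟩
      · rw [hH]; exact inv.hA q
      · rw [hH] at h1 ⊢; exact inv.hB pe c h1 h2
      · rw [hH]
        rw [hf] at hc
        rcases Set.mem_insert_iff.mp hc with h | h
        · exact h ▸ inv.hB _ a ha hseg
        · exact inv.hB' c h
      · rw [hf]
        simp only [Set.mem_insert_iff, not_or]
        exact ⟨fun hh => hseg hh.symm, inv.hC⟩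
      · rw [hv] at hpe
        rw [hH] at h1
        rw [hf]
        simp only [Set.mem_insert_iff, not_or]
        constructor
        · rintro rfl
          exact hpe.2 (Set.mem_union_left _ h1)
        · exact inv.hD pe hpe.1 c h1
      · rw [hv] at hpe
        rw [hH] at h1
        rw [hf]
        by_cases hmem : pe ∈ validOf seg τ
        · have hinv : pe ∈ invalidOf (heapOf τ) a := by
            by_contra hc
            exact hpe ⟨hmem, hc⟩
          rcases (Set.mem_union _ _ _).mp hinv with h2 | h2
          · exact absurd (Option.some.inj (h1.symm.trans h2)).symm hseg
          · obtain ⟨i, rfl⟩ := h2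
            exact ⟨a, i, rfl, Set.mem_insert _ _⟩
        · obtain ⟨b, i, rfl, hbF⟩ := inv.hE pe hmem h1
          exact ⟨b, i, rfl, Set.mem_insert_of_mem _ hbF⟩
  | copyP t p q c' b hsem hstep hb ih =>
    rename_i τ ctrl
    intro hPRF
    have inv := ih (CompPRF_prefix hPRF (List.prefix_append _ _))
    set act : Act A D PV DV T n := ⟨some (t, Com.copyP p q), Update.pt (.var p) b⟩ with hact
    have hpv : ∀ pe, (heapOf (τ ++ [act])).pval pe
        = if pe = PExp.var p then some b else (heapOf τ).pval pe := fun pe => by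
      rw [heapOf_append, pval_apply_pt]
    have hdv : ∀ de, (heapOf (τ ++ [act])).dval de = (heapOf τ).dval de := fun de => by
      rw [heapOf_append, dval_apply_pt]
    have hv : validOf seg (τ ++ [act])
        = if PExp.var q ∈ validOf seg τ then insert (PExp.var p) (validOf seg τ)
          else validOf seg τ \ {PExp.var p} := by
      rw [validOf_append, validStep_copyP]
    have hf : freedOf seg (τ ++ [act]) = freedOf seg τ := by
      rw [freedOf_append, freedStep_copyP]
    refine ⟨fun r => ?_, fun pe c h1 h2 => ?_, fun c hc => ?_, ?_,
      fun pe hpe c h1 => ?_, fun pe hpe h1 => ?_⟩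
    · rw [heapOf_append]; exact pval_apply_ne _ _ _ (inv.hA r)
    · rw [hpv pe] at h1
      rw [hdv]
      by_cases hpp : pe = PExp.var p
      · rw [if_pos hpp] at h1
        exact inv.hB (.var q) c (hb.trans h1) h2
      · rw [if_neg hpp] at h1
        exact inv.hB pe c h1 h2
    · rw [hf] at hc; rw [hdv]; exact inv.hB' c hc
    · rw [hf]; exact inv.hC
    · rw [hv] at hpe
      rw [hpv pe] at h1
      rw [hf]
      by_cases hpp : pe = PExp.var p
      · rw [if_pos hpp] at h1
        by_cases hq : PExp.var q ∈ validOf seg τ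
        · obtain rfl : b = c := Option.some.inj h1
          exact inv.hD _ hq b hb
        · rw [if_neg hq] at hpe
          rw [hpp] at hpe
          simp at hpe
      · rw [if_neg hpp] at h1
        by_cases hq : PExp.var q ∈ validOf seg τ
        · rw [if_pos hq] at hpe
          rcases Set.mem_insert_iff.mp hpe with h | h
          · exact absurd h hpp
          · exact inv.hD pe h c h1
        · rw [if_neg hq] at hpe
          exact inv.hD pe hpe.1 c h1
    · rw [hv] at hpe
      rw [hpv pe] at h1
      rw [hf]
      by_cases hpp : pe = PExp.var p
      · rw [if_pos hpp] at h1
        have hbseg : b = seg := Option.some.inj h1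
        by_cases hq : PExp.var q ∈ validOf seg τ
        · rw [if_pos hq] at hpe
          exact absurd (by rw [hpp]; exact Set.mem_insert _ _) hpe
        · obtain ⟨c, i, hci, -⟩ := inv.hE (.var q) hq (by rw [hb, hbseg])
          cases hci
      · rw [if_neg hpp] at h1
        have hnv : pe ∉ validOf seg τ := by
          intro hmem
          by_cases hq : PExp.var q ∈ validOf seg τ
          · rw [if_pos hq] at hpe
            exact hpe (Set.mem_insert_of_mem _ hmem)
          · rw [if_neg hq] at hpe
            exact hpe ⟨hmem, by simp [hpp]⟩
        exact inv.hE pe hnv h1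
  | readNext t p q i c' a b hsem hstep ha hane hbv ih =>
    rename_i τ ctrl
    intro hPRF
    have inv := ih (CompPRF_prefix hPRF (List.prefix_append _ _))
    have hqv : PExp.var q ∈ validOf seg τ := racy_valid hPRF rfl rfl
    set act : Act A D PV DV T n := ⟨some (t, Com.readNext p q i), Update.pt (.var p) b⟩ with hact
    have hpv : ∀ pe, (heapOf (τ ++ [act])).pval pe
        = if pe = PExp.var p then some b else (heapOf τ).pval pe := fun pe => by
      rw [heapOf_append, pval_apply_pt]
    have hdv : ∀ de, (heapOf (τ ++ [act])).dval de = (heapOf τ).dval de := fun de => by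
      rw [heapOf_append, dval_apply_pt]
    have hv : validOf seg (τ ++ [act])
        = if PExp.next a i ∈ validOf seg τ then insert (PExp.var p) (validOf seg τ)
          else validOf seg τ \ {PExp.var p} := by
      rw [validOf_append, validStep_readNext (ha := ha)]
    have hf : freedOf seg (τ ++ [act]) = freedOf seg τ := by
      rw [freedOf_append, freedStep_readNext]
    refine ⟨fun r => ?_, fun pe c h1 h2 => ?_, fun c hc => ?_, ?_,
      fun pe hpe c h1 => ?_, fun pe hpe h1 => ?_⟩
    · rw [heapOf_append]; exact pval_apply_ne _ _ _ (inv.hA r)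
    · rw [hpv pe] at h1
      rw [hdv]
      by_cases hpp : pe = PExp.var p
      · rw [if_pos hpp] at h1
        exact inv.hB (.next a i) c (hbv.trans h1) h2
      · rw [if_neg hpp] at h1
        exact inv.hB pe c h1 h2
    · rw [hf] at hc; rw [hdv]; exact inv.hB' c hc
    · rw [hf]; exact inv.hC
    · rw [hv] at hpe
      rw [hpv pe] at h1
      rw [hf]
      by_cases hpp : pe = PExp.var p
      · rw [if_pos hpp] at h1
        by_cases hni : PExp.next a i ∈ validOf seg τ
        · obtain rfl : b = c := Option.some.inj h1
          exact inv.hD _ hni b hbv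
        · rw [if_neg hni] at hpe
          rw [hpp] at hpe
          simp at hpe
      · rw [if_neg hpp] at h1
        by_cases hni : PExp.next a i ∈ validOf seg τ
        · rw [if_pos hni] at hpe
          rcases Set.mem_insert_iff.mp hpe with h | h
          · exact absurd h hpp
          · exact inv.hD pe h c h1
        · rw [if_neg hni] at hpe
          exact inv.hD pe hpe.1 c h1
    · rw [hv] at hpe
      rw [hpv pe] at h1
      rw [hf]
      by_cases hpp : pe = PExp.var p
      · rw [if_pos hpp] at h1
        have hbseg : b = seg := Option.some.inj h1
        by_cases hni : PExp.next a i ∈ validOf seg τ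
        · rw [if_pos hni] at hpe
          exact absurd (by rw [hpp]; exact Set.mem_insert _ _) hpe
        · obtain ⟨c, j, hci, hcF⟩ := inv.hE (.next a i) hni (by rw [hbv, hbseg])
          obtain ⟨rfl, -⟩ := PExp.next.inj hci
          exact absurd hcF (inv.hD (.var q) hqv a ha)
      · rw [if_neg hpp] at h1
        have hnv : pe ∉ validOf seg τ := by
          intro hmem
          by_cases hni : PExp.next a i ∈ validOf seg τ
          · rw [if_pos hni] at hpe
            exact hpe (Set.mem_insert_of_mem _ hmem)
          · rw [if_neg hni] at hpe
            exact hpe ⟨hmem, by simp [hpp]⟩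
        exact inv.hE pe hnv h1
  | writeNext t p i q c' a b hsem hstep hpa hane hqb ih =>
    rename_i τ ctrl
    intro hPRF
    have inv := ih (CompPRF_prefix hPRF (List.prefix_append _ _))
    have hpvld : PExp.var p ∈ validOf seg τ := racy_valid hPRF rfl rfl
    set act : Act A D PV DV T n := ⟨some (t, Com.writeNext p i q), Update.pt (.next a i) b⟩
      with hact
    have hpv : ∀ pe, (heapOf (τ ++ [act])).pval pe
        = if pe = PExp.next a i then some b else (heapOf τ).pval pe := fun pe => by
      rw [heapOf_append, pval_apply_pt]
    have hdv : ∀ de, (heapOf (τ ++ [act])).dval de = (heapOf τ).dval de := fun de => by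
      rw [heapOf_append, dval_apply_pt]
    have hv : validOf seg (τ ++ [act])
        = if PExp.var q ∈ validOf seg τ then insert (PExp.next a i) (validOf seg τ)
          else validOf seg τ \ {PExp.next a i} := by
      rw [validOf_append, validStep_writeNext (ha := hpa)]
    have hf : freedOf seg (τ ++ [act]) = freedOf seg τ := by
      rw [freedOf_append, freedStep_writeNext]
    refine ⟨fun r => ?_, fun pe c h1 h2 => ?_, fun c hc => ?_, ?_,
      fun pe hpe c h1 => ?_, fun pe hpe h1 => ?_⟩
    · rw [heapOf_append]; exact pval_apply_ne _ _ _ (inv.hA r)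
    · rw [hpv pe] at h1
      rw [hdv]
      by_cases hpp : pe = PExp.next a i
      · rw [if_pos hpp] at h1
        exact inv.hB (.var q) c (hqb.trans h1) h2
      · rw [if_neg hpp] at h1
        exact inv.hB pe c h1 h2
    · rw [hf] at hc; rw [hdv]; exact inv.hB' c hc
    · rw [hf]; exact inv.hC
    · rw [hv] at hpe
      rw [hpv pe] at h1
      rw [hf]
      by_cases hpp : pe = PExp.next a i
      · rw [if_pos hpp] at h1
        by_cases hq : PExp.var q ∈ validOf seg τ
        · obtain rfl : b = c := Option.some.inj h1
          exact inv.hD _ hq b hqb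
        · rw [if_neg hq] at hpe
          rw [hpp] at hpe
          simp at hpe
      · rw [if_neg hpp] at h1
        by_cases hq : PExp.var q ∈ validOf seg τ
        · rw [if_pos hq] at hpe
          rcases Set.mem_insert_iff.mp hpe with h | h
          · exact absurd h hpp
          · exact inv.hD pe h c h1
        · rw [if_neg hq] at hpe
          exact inv.hD pe hpe.1 c h1
    · rw [hv] at hpe
      rw [hpv pe] at h1
      rw [hf]
      by_cases hpp : pe = PExp.next a i
      · rw [if_pos hpp] at h1
        have hbseg : b = seg := Option.some.inj h1
        by_cases hq : PExp.var q ∈ validOf seg τ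
        · rw [if_pos hq] at hpe
          exact absurd (by rw [hpp]; exact Set.mem_insert _ _) hpe
        · obtain ⟨c, j, hci, -⟩ := inv.hE (.var q) hq (by rw [hqb, hbseg])
          cases hci
      · rw [if_neg hpp] at h1
        have hnv : pe ∉ validOf seg τ := by
          intro hmem
          by_cases hq : PExp.var q ∈ validOf seg τ
          · rw [if_pos hq] at hpe
            exact hpe (Set.mem_insert_of_mem _ hmem)
          · rw [if_neg hq] at hpe
            exact hpe ⟨hmem, by simp [hpp]⟩
        exact inv.hE pe hnv h1
  | malloc1 t p c' a d hsem hstep hfresh ih =>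
    rename_i τ ctrl
    intro hPRF
    have inv := ih (CompPRF_prefix hPRF (List.prefix_append _ _))
    set act : Act A D PV DV T n := ⟨some (t, Com.malloc p), mallocUpdate seg p a d⟩ with hact
    simp only [Heap.adr, Set.mem_setOf_eq, not_or, not_exists, not_and] at hfresh
    obtain ⟨hf1, hf2, hf3⟩ := hfresh
    have hpup : (mallocUpdate seg p a d : Update A D PV DV n).pup (PExp.var p) = some a := by
      simp [mallocUpdate]
    have hnF : a ∉ freedOf seg τ := fun hc => hf3 (DExp.data a) (inv.hB' a hc) rfl
    have hS : {pe : PExp A PV n | ∃ i, pe = PExp.next a i ∧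
          (mallocUpdate seg p a d : Update A D PV DV n).pup (PExp.next a i) ≠ none}
        = {pe : PExp A PV n | ∃ i, pe = PExp.next a i} := by
      ext pe
      simp [mallocUpdate]
    have hv : validOf seg (τ ++ [act])
        = insert (PExp.var p) (validOf seg τ) ∪ {pe : PExp A PV n | ∃ i, pe = PExp.next a i} := by
      rw [validOf_append, validStep_malloc (ha := hpup), hS]
    have hf : freedOf seg (τ ++ [act]) = freedOf seg τ \ {a} := by
      rw [freedOf_append, freedStep_malloc (ha := hpup)]
    have hpv : ∀ pe, (heapOf (τ ++ [act])).pval pe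
        = if pe = PExp.var p then some a
          else if ∃ i, pe = PExp.next a i then some seg else (heapOf τ).pval pe := fun pe => by
      rw [heapOf_append, pval_apply_malloc]
    have hdv : ∀ de, (heapOf (τ ++ [act])).dval de
        = if de = DExp.data a then some d else (heapOf τ).dval de := fun de => by
      rw [heapOf_append, dval_apply_malloc]
    refine ⟨fun r => ?_, fun pe c h1 h2 => ?_, fun c hc => ?_, ?_,
      fun pe hpe c h1 => ?_, fun pe hpe h1 => ?_⟩
    · rw [heapOf_append]; exact pval_apply_ne _ _ _ (inv.hA r)
    · rw [hpv pe] at h1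
      rw [hdv]
      by_cases h3 : pe = PExp.var p
      · rw [if_pos h3] at h1
        obtain rfl : a = c := Option.some.inj h1
        rw [if_pos rfl]
        simp
      · rw [if_neg h3] at h1
        by_cases h4 : ∃ j, pe = PExp.next a j
        · rw [if_pos h4] at h1
          exact absurd (Option.some.inj h1).symm h2
        · rw [if_neg h4] at h1
          have hold := inv.hB pe c h1 h2
          by_cases h5 : (DExp.data c : DExp A DV) = DExp.data a
          · rw [if_pos h5]; simp
          · rw [if_neg h5]; exact hold
    · rw [hf] at hc
      rw [hdv]
      have hold := inv.hB' c hc.1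
      by_cases h5 : (DExp.data c : DExp A DV) = DExp.data a
      · rw [if_pos h5]; simp
      · rw [if_neg h5]; exact hold
    · rw [hf]; exact fun hc => inv.hC hc.1
    · rw [hv] at hpe
      rw [hpv pe] at h1
      rw [hf]
      intro hcF
      by_cases h3 : pe = PExp.var p
      · rw [if_pos h3] at h1
        exact hcF.2 (Option.some.inj h1).symm
      · rw [if_neg h3] at h1
        by_cases h4 : ∃ j, pe = PExp.next a j
        · rw [if_pos h4] at h1
          obtain rfl : seg = c := Option.some.inj h1
          exact inv.hC hcF.1
        · rw [if_neg h4] at h1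
          have hmem : pe ∈ validOf seg τ := by
            rcases (Set.mem_union _ _ _).mp hpe with hh | hh
            · rcases Set.mem_insert_iff.mp hh with h | h
              · exact absurd h h3
              · exact h
            · exact absurd hh h4
          exact inv.hD pe hmem c h1 hcF.1
    · rw [hv] at hpe
      simp only [Set.mem_union, Set.mem_insert_iff, Set.mem_setOf_eq, not_or] at hpe
      obtain ⟨⟨h3, h5⟩, h4⟩ := hpe
      rw [hpv pe, if_neg h3, if_neg h4] at h1
      obtain ⟨c, j, rfl, hcF⟩ := inv.hE pe h5 h1
      rw [hf]
      exact ⟨c, j, rfl, hcF, fun hc => h4 ⟨j, by rw [hc]⟩⟩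
  | malloc2 t p c' a hmm hsem hstep hfree ih =>
    exact absurd hmm Bool.false_ne_true

/-- in a PRF computation under garbage collection, invalid
pointer variables never hold `seg`. -/
theorem invalid_var_not_seg (seg : A) (P : Program D PV DV T n)
    (σ : List (Act A D PV DV T n)) (hσ : σ ∈ gcsem seg P)
    (hPRF : CompPRF seg σ) (p : PV) (hp : PExp.var p ∉ validOf seg σ) :
    (heapOf σ).pval (PExp.var p) ≠ some seg := by
  obtain ⟨ctrl, hσ⟩ := hσ
  intro hseg
  obtain ⟨a, i, hpe, -⟩ := (inv_of_sem hσ hPRF).hE _ hp hseg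
  cases hpe

end

end PRF
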